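/- Let n ≥ 2 be a natural number and ξ a primitive n-th root of unity in ℂ. Then the sum over j from 1 to n-1 of ξ^j/(1 - ξ^j)^2 equals -(n^2 - 1)/12. -/

import Mathlib

open Finset

private lemma aux_sum_k (x : ℂ) (n : ℕ) :
    (∑ k ∈ range n, (k : ℂ) * x ^ k) * (x - 1) ^ 2
      = x ^ n * ((n : ℂ) * (x - 1) - x) + x := by
  induction n with
  | zero => simp
  | succ m ih =>
    rw [sum_range_succ, add_mul, ih]
    push_cast
    ring

private lemma aux_sum_k2 (x : ℂ) (n : ℕ) :
    (∑ k ∈ range n, (k : ℂ) ^ 2 * x ^ k) * (x - 1) ^ 3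
      = x ^ n * ((n : ℂ) ^ 2 * (x - 1) ^ 2 - 2 * n * x * (x - 1) + x ^ 2 + x)
        - x ^ 2 - x := by
  induction n with
  | zero => simp
  | succ m ih =>
    rw [sum_range_succ, add_mul, ih]
    push_cast
    ring

private lemma aux_gauss (n : ℕ) : (∑ k ∈ range n, (k : ℂ)) * 2 = n * (n - 1) := by
  induction n with
  | zero => simp
  | succ m ih =>
    rw [sum_range_succ, add_mul]
    push_cast
    push_cast at ih
    linear_combination ih

private lemma aux_sq (n : ℕ) :
    (∑ k ∈ range n, (k : ℂ) ^ 2) * 6 = n * (n - 1) * (2 * n - 1) := by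
  induction n with
  | zero => simp
  | succ m ih =>
    rw [sum_range_succ, add_mul]
    push_cast
    push_cast at ih
    linear_combination ih

private lemma key_identity (n : ℕ) (hn : 2 ≤ n) (x : ℂ) (hx : x ^ n = 1) (hx1 : x ≠ 1) :
    x / (1 - x) ^ 2 = (∑ k ∈ range n, (k : ℂ) * ((n : ℂ) - k) * x ^ k) / (2 * n) := by
  have hnC : (n : ℂ) ≠ 0 := Nat.cast_ne_zero.mpr (by omega)
  have h2n : (2 * (n : ℂ)) ≠ 0 := mul_ne_zero two_ne_zero hnC
  have hd : x - 1 ≠ 0 := sub_ne_zero.mpr hx1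
  have hd' : (1 - x) ^ 2 ≠ 0 := pow_ne_zero 2 (sub_ne_zero.mpr (Ne.symm hx1))
  have h1 := aux_sum_k x n
  have h2 := aux_sum_k2 x n
  rw [hx] at h1 h2
  have hsum : ∑ k ∈ range n, (k : ℂ) * ((n : ℂ) - k) * x ^ k
      = (n : ℂ) * (∑ k ∈ range n, (k : ℂ) * x ^ k)
        - ∑ k ∈ range n, (k : ℂ) ^ 2 * x ^ k := by
    rw [mul_sum, ← Finset.sum_sub_distrib]
    exact Finset.sum_congr rfl fun k _ => by ring
  rw [hsum, div_eq_div_iff hd' h2n]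
  apply mul_right_cancel₀ hd
  linear_combination (-(n : ℂ) * (x - 1)) * h1 + h2

theorem sum_root_div_sq_primitive_root (n : ℕ) (hn : 2 ≤ n) (ξ : ℂ)
    (hξ : IsPrimitiveRoot ξ n) :
    ∑ j ∈ Finset.Icc 1 (n - 1), ξ ^ j / (1 - ξ ^ j) ^ 2 = -((n : ℂ) ^ 2 - 1) / 12 := by
  have hnC : (n : ℂ) ≠ 0 := Nat.cast_ne_zero.mpr (by omega)
  have h2n : (2 * (n : ℂ)) ≠ 0 := mul_ne_zero two_ne_zero hnC
  have hIcc : Finset.Icc 1 (n - 1) = Finset.Ico 1 n := by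
    rw [← Finset.Ico_add_one_right_eq_Icc]
    congr 1
    omega
  -- rewrite each summand via key_identity
  have step1 : ∑ j ∈ Finset.Icc 1 (n - 1), ξ ^ j / (1 - ξ ^ j) ^ 2
      = ∑ j ∈ Finset.Icc 1 (n - 1),
          (∑ k ∈ range n, (k : ℂ) * ((n : ℂ) - k) * (ξ ^ k) ^ j) / (2 * n) := by
    refine Finset.sum_congr rfl fun j hj => ?_
    simp only [Finset.mem_Icc] at hj
    have hj1 : 1 ≤ j := hj.1
    have hjn : j < n := by omega
    have hx : (ξ ^ j) ^ n = 1 := by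
      rw [← pow_mul, mul_comm, pow_mul, hξ.pow_eq_one, one_pow]
    have hx1 : ξ ^ j ≠ 1 := hξ.pow_ne_one_of_pos_of_lt (by omega) hjn
    rw [key_identity n hn (ξ ^ j) hx hx1]
    congr 1
    exact Finset.sum_congr rfl fun k _ => by rw [← pow_mul, ← pow_mul, Nat.mul_comm j k]
  rw [step1, ← Finset.sum_div, Finset.sum_comm]
  -- inner sums over j
  have inner : ∀ k ∈ range n,
      ∑ j ∈ Finset.Icc 1 (n - 1), (k : ℂ) * ((n : ℂ) - k) * (ξ ^ k) ^ j
        = -((k : ℂ) * ((n : ℂ) - k)) := by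
    intro k hk
    rw [← Finset.mul_sum]
    rcases Nat.eq_zero_or_pos k with hk0 | hk0
    · subst hk0; simp
    · have hkn : k < n := Finset.mem_range.mp hk
      have hx1 : ξ ^ k ≠ 1 := hξ.pow_ne_one_of_pos_of_lt hk0.ne' hkn
      have hgeom : ∑ j ∈ range n, (ξ ^ k) ^ j = 0 := by
        have hd : ξ ^ k - 1 ≠ 0 := sub_ne_zero.mpr hx1
        have h := geom_sum_mul (ξ ^ k) n
        rw [← pow_mul, Nat.mul_comm k n, pow_mul, hξ.pow_eq_one, one_pow, sub_self] at h
        exact (mul_eq_zero.mp h).resolve_right hd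
      have hsub : ∑ j ∈ Finset.Icc 1 (n - 1), (ξ ^ k) ^ j = -1 := by
        rw [hIcc, Finset.sum_Ico_eq_sub _ (by omega : 1 ≤ n), hgeom]
        simp
      rw [hsub]
      ring
  rw [Finset.sum_congr rfl inner]
  -- final arithmetic
  have hg := aux_gauss n
  have hs := aux_sq n
  have hsum : ∑ k ∈ range n, -((k : ℂ) * ((n : ℂ) - k))
      = -((n : ℂ) * ∑ k ∈ range n, (k : ℂ)) + ∑ k ∈ range n, (k : ℂ) ^ 2 := by
    rw [Finset.mul_sum, ← Finset.sum_neg_distrib, ← Finset.sum_add_distrib]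
    exact Finset.sum_congr rfl fun k _ => by ring
  rw [hsum]
  field_simp
  linear_combination (-6 * (n : ℂ)) * hg + 2 * hs
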